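/- arXiv:1810.03501 — 3 statements merged into one kernel-verified Lean document; each statement's English description precedes it below -/
import Mathlib

section
/- Let β > 0, r ∈ ℝ, and define F(x) = (1/β) ln x + (1/β)(r/β + ln β − 1) for x > 0. Then for the deterministic control problem sup over c > 0 of ∫₀^∞ e^{−βt} ln c_t dt subject to dX_t = (r X_t − c_t) dt, X_0 = x, the value equals F(x), attained by c_t = β X_t. -/
open MeasureTheory Set Real Filter Topology

lemma expPoly_integrableOn (β a b : ℝ) (hβ : 0 < β) :
    IntegrableOn (fun t => Real.exp (-β * t) * (a + b * t)) (Ioi 0) := by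
  have hhalf : 0 < β / 2 := half_pos hβ
  have hbd : IntegrableOn (fun t => (|a| + 2 * |b| / β) * Real.exp (-(β/2) * t)) (Ioi 0) :=
    (exp_neg_integrableOn_Ioi 0 hhalf).const_mul _
  refine hbd.mono' ((Continuous.aestronglyMeasurable (by fun_prop)).restrict) ?_
  filter_upwards [ae_restrict_mem measurableSet_Ioi] with t ht
  have ht0 : (0:ℝ) < t := ht
  have hE : Real.exp (-β * t) ≤ Real.exp (-(β/2) * t) := by
    apply Real.exp_le_exp.2; nlinarith
  have h2 : t * Real.exp (-(β/2) * t) ≤ 2 / β := by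
    have h3 : (β/2) * t ≤ Real.exp ((β/2) * t) := by
      have := Real.add_one_le_exp ((β/2) * t); linarith
    have h4 : Real.exp (-(β/2) * t) = (Real.exp ((β/2) * t))⁻¹ := by
      rw [← Real.exp_neg]; ring_nf
    rw [h4]
    rw [mul_inv_le_iff₀ (Real.exp_pos _), mul_comm (2/β)]
    calc t = (2/β) * ((β/2) * t) := by field_simp
      _ ≤ (2/β) * Real.exp ((β/2) * t) := by
          apply mul_le_mul_of_nonneg_left h3 (by positivity)
      _ = Real.exp ((β/2)*t) * (2/β) := by ring
  have hEE : Real.exp (-β * t) = Real.exp (-(β/2) * t) * Real.exp (-(β/2) * t) := by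
    rw [← Real.exp_add]; ring_nf
  calc ‖Real.exp (-β * t) * (a + b * t)‖
      = Real.exp (-β * t) * |a + b * t| := by
        rw [norm_mul, Real.norm_eq_abs, Real.norm_eq_abs, abs_of_pos (Real.exp_pos _)]
    _ ≤ Real.exp (-β * t) * (|a| + |b| * t) := by
        refine mul_le_mul_of_nonneg_left ?_ (Real.exp_pos _).le
        calc |a + b * t| ≤ |a| + |b * t| := abs_add_le _ _
          _ = |a| + |b| * t := by rw [abs_mul, abs_of_pos ht0]
    _ = |a| * Real.exp (-β * t) + |b| * (t * Real.exp (-β * t)) := by ring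
    _ ≤ |a| * Real.exp (-(β/2) * t) + |b| * ((2/β) * Real.exp (-(β/2) * t)) := by
        have hb1 : t * Real.exp (-β * t) ≤ (2/β) * Real.exp (-(β/2) * t) := by
          rw [hEE, ← mul_assoc]
          exact mul_le_mul_of_nonneg_right h2 (Real.exp_pos _).le
        have := mul_le_mul_of_nonneg_left hE (abs_nonneg a)
        have := mul_le_mul_of_nonneg_left hb1 (abs_nonneg b)
        linarith
    _ = (|a| + 2 * |b| / β) * Real.exp (-(β/2) * t) := by ring

lemma expPoly_integral (β a b : ℝ) (hβ : 0 < β) :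
    ∫ t in Ioi (0:ℝ), Real.exp (-β * t) * (a + b * t) = a / β + b / β ^ 2 := by
  have hder : ∀ t ∈ Ici (0:ℝ),
      HasDerivAt (fun s => -(Real.exp (-β * s) * ((a + b * s) / β + b / β ^ 2)))
        (Real.exp (-β * t) * (a + b * t)) t := by
    intro t _
    have h1 : HasDerivAt (fun s : ℝ => -β * s) (-β) t := by
      simpa using (hasDerivAt_id t).const_mul (-β)
    have h2 : HasDerivAt (fun s : ℝ => Real.exp (-β * s)) (Real.exp (-β * t) * (-β)) t := h1.exp
    have h3 : HasDerivAt (fun s : ℝ => (a + b * s) / β + b / β ^ 2) (b / β) t := by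
      have h := (((hasDerivAt_id t).const_mul b).const_add a).div_const β
      simpa using h.add_const (b / β ^ 2)
    have h4 := (h2.mul h3).neg
    refine h4.congr_deriv ?_
    field_simp
    ring
  have htend : Tendsto (fun t => -(Real.exp (-β * t) * ((a + b * t) / β + b / β ^ 2)))
      atTop (𝓝 0) := by
    have hA : Tendsto (fun t : ℝ => Real.exp (-β * t)) atTop (𝓝 0) := by
      simpa using tendsto_rpow_mul_exp_neg_mul_atTop_nhds_zero 0 β hβ
    have hB : Tendsto (fun t : ℝ => t * Real.exp (-β * t)) atTop (𝓝 0) := by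
      simpa using tendsto_rpow_mul_exp_neg_mul_atTop_nhds_zero 1 β hβ
    have hC := ((hA.const_mul (a / β + b / β ^ 2)).add (hB.const_mul (b / β))).neg
    simp only [mul_zero, add_zero, neg_zero, zero_add] at hC
    refine hC.congr (fun t => ?_)
    ring
  have h := integral_Ioi_of_hasDerivAt_of_tendsto' hder (expPoly_integrableOn β a b hβ) htend
  rw [h]
  norm_num [Real.exp_zero]

lemma opt_fun_eq (β r x : ℝ) (hβ : 0 < β) (hx : 0 < x) :
    (fun t => Real.exp (-β * t) * Real.log (β * (x * Real.exp ((r - β) * t)))) =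
    fun t => Real.exp (-β * t) * ((Real.log β + Real.log x) + (r - β) * t) := by
  funext t
  rw [Real.log_mul hβ.ne' (by positivity), Real.log_mul hx.ne' (Real.exp_ne_zero _),
    Real.log_exp]
  ring

lemma opt_deriv (β r x : ℝ) (t : ℝ) :
    HasDerivAt (fun t => x * Real.exp ((r - β) * t))
      (r * (x * Real.exp ((r - β) * t)) - β * (x * Real.exp ((r - β) * t))) t := by
  have h1 : HasDerivAt (fun s : ℝ => (r - β) * s) (r - β) t := by
    simpa using (hasDerivAt_id t).const_mul (r - β)
  have h2 := (h1.exp).const_mul x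
  refine h2.congr_deriv ?_; ring

lemma opt_integral (β r x : ℝ) (hβ : 0 < β) (hx : 0 < x) :
    (∫ t in Ioi (0:ℝ), Real.exp (-β * t) * Real.log (β * (x * Real.exp ((r - β) * t))))
      = (1/β) * Real.log x + (1/β) * (r/β + Real.log β - 1) := by
  rw [opt_fun_eq β r x hβ hx, expPoly_integral β _ _ hβ]
  field_simp
  ring

/-- The deterministic logarithmic-utility consumption problem: the supremum of
`∫₀^∞ e^{-βt} ln c_t dt` over admissible pairs `(X, c)` with `X' = rX - c`,
`X₀ = x`, `c > 0`, `X ≥ 0`, equals `F(x) = (1/β) ln x + (1/β)(r/β + ln β - 1)`,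
and it is attained by `c_t = β X_t`. -/
theorem deterministic_log_consumption_value (β r x : ℝ) (hβ : 0 < β) (hx : 0 < x) :
    IsGreatest
      {J : ℝ | ∃ X c : ℝ → ℝ,
        X 0 = x ∧
        (∀ t, 0 ≤ t → HasDerivAt X (r * X t - c t) t) ∧
        (∀ t, 0 ≤ t → 0 < c t) ∧
        (∀ t, 0 ≤ t → 0 ≤ X t) ∧
        IntegrableOn (fun t => Real.exp (-β * t) * Real.log (c t)) (Ioi 0) ∧
        J = ∫ t in Ioi (0:ℝ), Real.exp (-β * t) * Real.log (c t)}
      ((1/β) * Real.log x + (1/β) * (r/β + Real.log β - 1)) ∧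
    ∃ X : ℝ → ℝ,
      X 0 = x ∧
      (∀ t, 0 ≤ t → HasDerivAt X (r * X t - β * X t) t) ∧
      (∀ t, 0 ≤ t → 0 < X t) ∧
      (∫ t in Ioi (0:ℝ), Real.exp (-β * t) * Real.log (β * X t))
        = (1/β) * Real.log x + (1/β) * (r/β + Real.log β - 1) := by
  constructor
  · constructor
    · -- membership
      refine ⟨fun t => x * Real.exp ((r - β) * t), fun t => β * (x * Real.exp ((r - β) * t)),
        by simp, fun t _ => opt_deriv β r x t, fun t _ => by positivity,
        fun t _ => by positivity, ?_, (opt_integral β r x hβ hx).symm⟩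
      have h := expPoly_integrableOn β (Real.log β + Real.log x) (r - β) hβ
      rwa [← opt_fun_eq β r x hβ hx] at h
    · -- upper bound
      rintro J ⟨X, c, h0, hD, hc, hX, hint, rfl⟩
      have key : ∀ T : ℝ, 0 ≤ T →
          (∫ t in (0:ℝ)..T, Real.exp (-β * t) * Real.log (c t)) ≤
          (∫ t in (0:ℝ)..T,
            Real.exp (-β * t) * ((Real.log β + Real.log x - 1) + (r - β) * t)) + 1/β := by
        intro T hT
        have hg : ∀ t ∈ Icc (0:ℝ) T, HasDerivAt (fun s => -(Real.exp (-r * s) * X s))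
            (Real.exp (-r * t) * c t) t := by
          intro t ht
          have h1 : HasDerivAt (fun s : ℝ => -r * s) (-r) t := by
            simpa using (hasDerivAt_id t).const_mul (-r)
          have h3 := ((h1.exp).mul (hD t ht.1)).neg
          refine h3.congr_deriv ?_; ring
        have hci : IntervalIntegrable (fun t => Real.exp (-r * t) * c t) volume 0 T := by
          apply intervalIntegral.intervalIntegrable_deriv_of_nonneg (g := fun s => -(Real.exp (-r * s) * X s))
          · rw [uIcc_of_le hT]
            exact fun t ht => ((hg t ht).continuousAt).continuousWithinAt
          · rw [min_eq_left hT, max_eq_right hT]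
            exact fun t ht => hg t (Ioo_subset_Icc_self ht)
          · rw [min_eq_left hT, max_eq_right hT]
            intro t ht
            exact mul_nonneg (Real.exp_pos _).le (hc t ht.1.le).le
        have hftc : ∫ t in (0:ℝ)..T, Real.exp (-r * t) * c t
            = -(Real.exp (-r * T) * X T) - -(Real.exp (-r * 0) * X 0) := by
          refine intervalIntegral.integral_eq_sub_of_hasDerivAt
            (f := fun s => -(Real.exp (-r * s) * X s)) ?_ hci
          rw [uIcc_of_le hT]; exact hg
        have hcle : ∫ t in (0:ℝ)..T, Real.exp (-r * t) * c t ≤ x := by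
          rw [hftc, h0]
          have h5 : 0 ≤ Real.exp (-r * T) * X T := mul_nonneg (Real.exp_pos _).le (hX T hT)
          simp only [mul_zero, Real.exp_zero, one_mul]
          linarith
        have hfi : IntervalIntegrable (fun t => Real.exp (-β * t) * Real.log (c t))
            volume 0 T := by
          rw [intervalIntegrable_iff_integrableOn_Ioc_of_le hT]
          exact hint.mono_set Ioc_subset_Ioi_self
        have hGi : IntervalIntegrable
            (fun t => Real.exp (-β * t) * ((Real.log β + Real.log x - 1) + (r - β) * t))
            volume 0 T := Continuous.intervalIntegrable (by fun_prop) _ _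
        have hptw : ∀ t ∈ Icc (0:ℝ) T, Real.exp (-β * t) * Real.log (c t) ≤
            Real.exp (-β * t) * ((Real.log β + Real.log x - 1) + (r - β) * t)
              + (1/(β*x)) * (Real.exp (-r * t) * c t) := by
          intro t ht
          have hct := hc t ht.1
          have hden : (0:ℝ) < β * x * Real.exp ((r - β) * t) := by positivity
          have h1 := Real.log_le_sub_one_of_pos (div_pos hct hden)
          rw [Real.log_div hct.ne' hden.ne', Real.log_mul (mul_pos hβ hx).ne'
            (Real.exp_ne_zero _), Real.log_mul hβ.ne' hx.ne', Real.log_exp] at h1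
          have h2 : Real.log (c t) ≤ ((Real.log β + Real.log x - 1) + (r - β) * t)
              + c t / (β * x * Real.exp ((r - β) * t)) := by linarith
          have h3 := mul_le_mul_of_nonneg_left h2 (Real.exp_pos (-β * t)).le
          have h4 : Real.exp (-β * t) * (c t / (β * x * Real.exp ((r - β) * t)))
              = (1/(β*x)) * (Real.exp (-r * t) * c t) := by
            have hee : Real.exp (-β * t) = Real.exp (-r * t) * Real.exp ((r - β) * t) := by
              rw [← Real.exp_add]; ring_nf
            rw [hee]
            field_simp
          calc Real.exp (-β * t) * Real.log (c t)
              ≤ Real.exp (-β * t) * (((Real.log β + Real.log x - 1) + (r - β) * t)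
                + c t / (β * x * Real.exp ((r - β) * t))) := h3
            _ = Real.exp (-β * t) * ((Real.log β + Real.log x - 1) + (r - β) * t)
                + (1/(β*x)) * (Real.exp (-r * t) * c t) := by rw [mul_add, h4]
        have hmono := intervalIntegral.integral_mono_on hT hfi
          (hGi.add (hci.const_mul (1/(β*x)))) hptw
        have hsplit : (∫ t in (0:ℝ)..T,
            (Real.exp (-β * t) * ((Real.log β + Real.log x - 1) + (r - β) * t)
              + (1/(β*x)) * (Real.exp (-r * t) * c t)))
            = (∫ t in (0:ℝ)..T,
                Real.exp (-β * t) * ((Real.log β + Real.log x - 1) + (r - β) * t))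
              + (1/(β*x)) * ∫ t in (0:ℝ)..T, Real.exp (-r * t) * c t := by
          rw [intervalIntegral.integral_add hGi (hci.const_mul _),
            intervalIntegral.integral_const_mul]
        have h6 : (1/(β*x)) * (∫ t in (0:ℝ)..T, Real.exp (-r * t) * c t) ≤ (1/(β*x)) * x :=
          mul_le_mul_of_nonneg_left hcle (by positivity)
        have h7 : (1/(β*x)) * x = 1/β := by field_simp
        rw [hsplit] at hmono
        linarith
      have hL1 := intervalIntegral_tendsto_integral_Ioi (0:ℝ) hint tendsto_id
      have hGint := expPoly_integrableOn β (Real.log β + Real.log x - 1) (r - β) hβ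
      have hL2 := (intervalIntegral_tendsto_integral_Ioi (0:ℝ) hGint tendsto_id).add
        (tendsto_const_nhds (x := (1:ℝ)/β) (f := atTop))
      have hle := le_of_tendsto_of_tendsto hL1 hL2 ((eventually_ge_atTop (0:ℝ)).mono key)
      rw [expPoly_integral β _ _ hβ] at hle
      refine hle.trans_eq ?_
      field_simp
      ring
  · exact ⟨fun t => x * Real.exp ((r - β) * t), by simp, fun t _ => opt_deriv β r x t,
      fun t _ => by positivity, opt_integral β r x hβ hx⟩
end

section
/- Let β > 0, r, ρ, λ with ρ > r + λ > 0 and μ = ρ. Set q* = (ρ−r−λ)/(β(ρ−r)) and m(q) = (β/(β+λ))[(ρ−r)q + (λ/β) ln(1/β − q)]. Then z(q) := (βq/(1−βq)) exp(−∫_q^{q*} m'(v)/(βv) dv) equals ((ρ−r−λ)/λ)^{λ/(β+λ)} ((ρ−r−λ)/(β(ρ−r)))^{−(ρ−r)/(β+λ)} (βq/(1−βq))^{β/(β+λ)} q^{(ρ−r)/(β+λ)} for q ∈ (0, q*]. In particular z(q*) = (ρ−r−λ)/λ. -/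
open Set MeasureTheory

/-- Closed-form evaluation of the coordinate link `z(q)` in the corner case
`μ = ρ > r + λ` of the dividend model, where
`m'(v)/(βv) = (1/(β+λ))((ρ-r)/v - λ/(v(1-βv)))`. -/
theorem closed_form_z_corner_case (β lam ρ r : ℝ) (hβ : 0 < β) (hlam : 0 < lam)
    (h1 : r + lam < ρ) (h2 : 0 < r + lam) :
    let qstar : ℝ := (ρ - r - lam) / (β * (ρ - r))
    let z : ℝ → ℝ := fun q =>
      (β * q / (1 - β * q)) *
        Real.exp (-∫ v in Ioc q qstar,
          (1/(β+lam)) * ((ρ - r)/v - lam/(v * (1 - β * v))))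
    ((∀ q ∈ Ioc 0 qstar,
        z q = ((ρ - r - lam)/lam) ^ (lam/(β+lam))
          * ((ρ - r - lam)/(β*(ρ - r))) ^ (-(ρ - r)/(β+lam))
          * (β * q / (1 - β * q)) ^ (β/(β+lam))
          * q ^ ((ρ - r)/(β+lam))) ∧
      z qstar = (ρ - r - lam)/lam) := by
  intro qstar z
  have hρr : 0 < ρ - r := by linarith
  have hnum : 0 < ρ - r - lam := by linarith
  have hs : 0 < β + lam := by linarith
  have hq0 : 0 < qstar := div_pos hnum (by positivity)
  have hbq : β * qstar = (ρ - r - lam) / (ρ - r) := by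
    show β * ((ρ - r - lam) / (β * (ρ - r))) = _
    field_simp
  have h1q : 1 - β * qstar = lam / (ρ - r) := by
    rw [hbq]; field_simp; ring
  have h1qpos : 0 < 1 - β * qstar := by rw [h1q]; positivity
  set F : ℝ → ℝ := fun v => (1/(β+lam)) * ((ρ - r - lam) * Real.log v + lam * Real.log (1 - β*v)) with hF
  constructor
  · rintro q ⟨hq, hqle⟩
    have h1qq : 0 < 1 - β * q := by
      have : β * q ≤ β * qstar := by nlinarith
      linarith
    -- compute the integral
    have hint : (∫ v in Ioc q qstar,
          (1/(β+lam)) * ((ρ - r)/v - lam/(v * (1 - β * v)))) = F qstar - F q := by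
      rw [← intervalIntegral.integral_of_le hqle]
      apply intervalIntegral.integral_eq_sub_of_hasDerivAt
      · intro x hx
        rw [Set.uIcc_of_le hqle] at hx
        have hx0 : 0 < x := lt_of_lt_of_le hq hx.1
        have hx1 : 0 < 1 - β * x := by
          have : β * x ≤ β * qstar := by nlinarith [hx.2]
          linarith
        have hd1 : HasDerivAt (fun v => Real.log v) (1/x) x := by
          simpa using Real.hasDerivAt_log hx0.ne'
        have hd2 : HasDerivAt (fun v : ℝ => 1 - β * v) (-β) x := by
          simpa using ((hasDerivAt_id x).const_mul β).const_sub 1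
        have hd3 : HasDerivAt (fun v => Real.log (1 - β * v)) ((1 - β*x)⁻¹ * (-β)) x :=
          by have := (Real.hasDerivAt_log hx1.ne').comp x hd2; exact this
        have hd : HasDerivAt F ((1/(β+lam)) * ((ρ - r - lam) * (1/x) + lam * ((1 - β*x)⁻¹ * (-β)))) x := by
          exact ((hd1.const_mul (ρ - r - lam)).add (hd3.const_mul lam)).const_mul _
        refine hd.congr_deriv ?_
        field_simp
        ring
      · apply ContinuousOn.intervalIntegrable
        apply ContinuousOn.mul continuousOn_const
        apply ContinuousOn.sub
        · exact continuousOn_const.div continuousOn_id (fun x hx => by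
            rw [Set.uIcc_of_le hqle] at hx
            exact (lt_of_lt_of_le hq hx.1).ne')
        · apply continuousOn_const.div
          · exact continuousOn_id.mul (continuousOn_const.sub (continuousOn_const.mul continuousOn_id))
          · intro x hx
            rw [Set.uIcc_of_le hqle] at hx
            have hx0 : 0 < x := lt_of_lt_of_le hq hx.1
            have hx1 : 0 < 1 - β * x := by
              have : β * x ≤ β * qstar := by nlinarith [hx.2]
              linarith
            positivity
    show (β * q / (1 - β * q)) * Real.exp (-(∫ v in Ioc q qstar, _)) = _
    rw [hint]
    have hbase : 0 < β * q / (1 - β * q) := by positivity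
    rw [Real.rpow_def_of_pos (by positivity : (0:ℝ) < (ρ - r - lam)/lam),
        Real.rpow_def_of_pos (by positivity : (0:ℝ) < (ρ - r - lam)/(β*(ρ - r))),
        Real.rpow_def_of_pos hbase, Real.rpow_def_of_pos hq,
        ← Real.exp_add, ← Real.exp_add, ← Real.exp_add]
    nth_rewrite 1 [← Real.exp_log hbase]
    rw [← Real.exp_add, Real.exp_eq_exp]
    have e1 : Real.log (β * q / (1 - β * q)) = Real.log β + Real.log q - Real.log (1 - β*q) := by
      rw [Real.log_div (by positivity) h1qq.ne', Real.log_mul hβ.ne' hq.ne']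
    have e2 : Real.log ((ρ - r - lam)/lam) = Real.log (ρ - r - lam) - Real.log lam :=
      Real.log_div hnum.ne' hlam.ne'
    have e3 : Real.log ((ρ - r - lam)/(β*(ρ - r))) = Real.log (ρ - r - lam) - (Real.log β + Real.log (ρ - r)) := by
      rw [Real.log_div hnum.ne' (by positivity), Real.log_mul hβ.ne' hρr.ne']
    have e4 : Real.log qstar = Real.log (ρ - r - lam) - (Real.log β + Real.log (ρ - r)) := e3
    have e5 : Real.log (1 - β * qstar) = Real.log lam - Real.log (ρ - r) := by
      rw [h1q, Real.log_div hlam.ne' hρr.ne']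
    rw [hF]
    simp only [e1, e2, e3, e4, e5]
    field_simp
    ring
  · show (β * qstar / (1 - β * qstar)) * Real.exp (-(∫ v in Ioc qstar qstar, _)) = _
    rw [Set.Ioc_self, MeasureTheory.setIntegral_empty, neg_zero, Real.exp_zero, mul_one,
        h1q, hbq]
    field_simp
end

section
/- Let β > 0, λ ≥ 0, r, ρ with μ = ρ ≤ r + λ, and define V(s,x) = (1/β) ln(s+x) + (1/β)(r/β + ln β − 1) and F(x) = (1/β) ln x + (1/β)(r/β + ln β − 1). Then for all s > 0, x > 0: −ln V_x − 1 + r x V_x + ρ s V_s − (β+λ)V + λF(x) = (λ/β) ln(x/(s+x)) + ((ρ−r)/β)(s/(s+x)) ≤ 0. -/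
/-- In the degenerate regime `μ = ρ ≤ r + λ`, the candidate value function is a
supersolution of the HJB operator: the drift expression evaluates to
`(λ/β)ln(x/(s+x)) + ((ρ-r)/β)(s/(s+x))` which is nonpositive. -/
theorem degenerate_supersolution (β lam ρ r μ : ℝ) (hβ : 0 < β) (hlam : 0 ≤ lam)
    (hμ : μ = ρ) (hρ : ρ ≤ r + lam) :
    let V : ℝ → ℝ → ℝ := fun s x =>
      (1/β) * Real.log (s + x) + (1/β) * (r/β + Real.log β - 1)
    let F : ℝ → ℝ := fun x =>
      (1/β) * Real.log x + (1/β) * (r/β + Real.log β - 1)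
    ∀ s x : ℝ, 0 < s → 0 < x →
      (-Real.log (1/(β*(s+x))) - 1 + r * x * (1/(β*(s+x))) + ρ * s * (1/(β*(s+x)))
          - (β + lam) * V s x + lam * F x
        = (lam/β) * Real.log (x/(s+x)) + ((ρ - r)/β) * (s/(s+x))) ∧
      (lam/β) * Real.log (x/(s+x)) + ((ρ - r)/β) * (s/(s+x)) ≤ 0 := by
  intro V F s x hs hx
  have hsx : 0 < s + x := by linarith
  constructor
  · have h1 : Real.log (1/(β*(s+x))) = -(Real.log β + Real.log (s+x)) := by
      rw [one_div, Real.log_inv, Real.log_mul hβ.ne' hsx.ne']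
    have h2 : Real.log (x/(s+x)) = Real.log x - Real.log (s+x) :=
      Real.log_div hx.ne' hsx.ne'
    simp only [V, F, h1, h2]
    field_simp
    ring
  · set α : ℝ := x/(s+x) with hα
    have hα0 : 0 < α := div_pos hx hsx
    have hα1 : α < 1 := (div_lt_one hsx).mpr (by linarith)
    have hlog : Real.log α ≤ α - 1 := by
      have := Real.log_le_sub_one_of_pos hα0
      linarith
    have hsval : s/(s+x) = 1 - α := by rw [hα]; field_simp; ring
    rw [hsval]
    have key : lam * Real.log α + (ρ - r) * (1 - α) ≤ 0 := by
      rcases le_or_gt (ρ - r) 0 with h | h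
      · have h1 : lam * Real.log α ≤ 0 :=
          mul_nonpos_of_nonneg_of_nonpos hlam (by
            have := Real.log_nonpos hα0.le hα1.le; linarith)
        nlinarith
      · have h2 : (ρ - r) * (1 - α) ≤ lam * (1 - α) := by
          apply mul_le_mul_of_nonneg_right (by linarith) (by linarith)
        nlinarith [mul_le_mul_of_nonneg_left hlog hlam]
    have : (lam/β) * Real.log α + ((ρ - r)/β) * (1 - α)
        = (lam * Real.log α + (ρ - r) * (1 - α)) / β := by ring
    rw [this]
    exact div_nonpos_of_nonpos_of_nonneg key hβ.le
end
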